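/- Let σ be a 3×3 real symmetric matrix with ordered eigenvalues σ_I ≥ σ_II ≥ σ_III, and let n be a unit vector in ℝ³. Write Σ := ⟨σn, n⟩ and T := σn − Σn. Then (Σ − (σ_I+σ_III)/2)² + ‖T‖² ≤ ((σ_I−σ_III)/2)². In other words, the stress vector σn lies in the ball of radius (σ_I−σ_III)/2 centered at ((σ_I+σ_III)/2)·n plus its orthogonal complement, in the Mohr representation. -/
import Mathlib


open Matrix

/-- Mohr's bound: for a symmetric 3×3 matrix `σ` with ordered eigenvalues
`μ 0 ≥ μ 1 ≥ μ 2` (given by an orthonormal eigenbasis `e`) and a unit vector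
`n`, writing `Σ = ⟨σn, n⟩` and `T = σn − Σn`, one has
`(Σ − (σ_I+σ_III)/2)² + ‖T‖² ≤ ((σ_I−σ_III)/2)²`. -/
theorem mohr_circle_bound (σ : Matrix (Fin 3) (Fin 3) ℝ) (hσ : σ.IsSymm)
    (e : Fin 3 → Fin 3 → ℝ) (μ : Fin 3 → ℝ)
    (horth : ∀ i j, e i ⬝ᵥ e j = if i = j then 1 else 0)
    (heig : ∀ i, σ *ᵥ e i = μ i • e i)
    (hord : μ 1 ≤ μ 0 ∧ μ 2 ≤ μ 1)
    (n : Fin 3 → ℝ) (hn : n ⬝ᵥ n = 1) :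
    ((σ *ᵥ n) ⬝ᵥ n - (μ 0 + μ 2) / 2) ^ 2
      + (σ *ᵥ n - ((σ *ᵥ n) ⬝ᵥ n) • n) ⬝ᵥ (σ *ᵥ n - ((σ *ᵥ n) ⬝ᵥ n) • n)
      ≤ ((μ 0 - μ 2) / 2) ^ 2 := by
  set E : Matrix (Fin 3) (Fin 3) ℝ := Matrix.of e with hEdef
  have hE1 : E * Eᵀ = 1 := by
    ext i j
    simpa [Matrix.mul_apply, Matrix.one_apply, dotProduct, hEdef] using horth i j
  have hE2 : Eᵀ * E = 1 := by
    rw [mul_eq_one_comm] at hE1; exact hE1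
  -- Parseval identity
  have hpar : ∀ v w : Fin 3 → ℝ, v ⬝ᵥ w = ∑ i, (e i ⬝ᵥ v) * (e i ⬝ᵥ w) := by
    intro v w
    have h1 : (E *ᵥ v) ⬝ᵥ (E *ᵥ w) = v ⬝ᵥ w := by
      rw [Matrix.dotProduct_mulVec, ← Matrix.mulVec_transpose,
        Matrix.mulVec_mulVec, hE2, Matrix.one_mulVec]
    rw [← h1, dotProduct]; rfl
  have key : ∀ i, e i ⬝ᵥ (σ *ᵥ n) = μ i * (e i ⬝ᵥ n) := by
    intro i
    rw [dotProduct_mulVec, ← Matrix.mulVec_transpose, hσ.eq, heig i, smul_dotProduct,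
      smul_eq_mul]
  set c : Fin 3 → ℝ := fun i => e i ⬝ᵥ n with hcdef
  have h1 : (∑ i, c i * c i) = 1 := by rw [← hpar n n, hn]
  have h2 : (σ *ᵥ n) ⬝ᵥ n = ∑ i, μ i * (c i * c i) := by
    rw [dotProduct_comm, hpar n (σ *ᵥ n)]
    apply Finset.sum_congr rfl
    intro i _
    rw [key i]; ring
  have h3 : (σ *ᵥ n) ⬝ᵥ (σ *ᵥ n) = ∑ i, μ i * μ i * (c i * c i) := by
    rw [hpar (σ *ᵥ n) (σ *ᵥ n)]
    apply Finset.sum_congr rfl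
    intro i _
    rw [key i]; ring
  have hT : (σ *ᵥ n - ((σ *ᵥ n) ⬝ᵥ n) • n) ⬝ᵥ (σ *ᵥ n - ((σ *ᵥ n) ⬝ᵥ n) • n)
      = (σ *ᵥ n) ⬝ᵥ (σ *ᵥ n) - ((σ *ᵥ n) ⬝ᵥ n) ^ 2 := by
    simp only [sub_dotProduct, dotProduct_sub, smul_dotProduct,
      dotProduct_smul, smul_eq_mul, hn, dotProduct_comm n (σ *ᵥ n)]
    ring
  rw [hT, h2, h3]
  simp only [Fin.sum_univ_three] at h1 ⊢
  obtain ⟨ha, hb⟩ := hord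
  nlinarith [sq_nonneg (c 0), sq_nonneg (c 1), sq_nonneg (c 2),
    mul_nonneg (mul_nonneg (sq_nonneg (c 1)) (sub_nonneg.mpr ha)) (sub_nonneg.mpr hb),
    sq_nonneg (c 0 * c 1 * (μ 0 - μ 1)), sq_nonneg (c 1 * c 2 * (μ 1 - μ 2)),
    sq_nonneg (c 0 * c 2 * (μ 0 - μ 2)),
    mul_nonneg (sq_nonneg (c 0)) (mul_nonneg (sub_nonneg.mpr (ha.trans' hb)) (sq_nonneg (c 2))),
    sq_nonneg (μ 0 - μ 2)]
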